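/- Let Ψ be the nilpotent adjacency matrix of a simple graph G on m vertices. For each vertex i and each positive integer k, the (i,i) entry of (Ψ + Ψ†)^k equals twice the (i,i) entry of Ψ^k; that is, ⟨i|(Ψ+Ψ†)^k|i⟩ = 2 Σ_{|I|=k} ω_I ζ_I where ω_I is the number of k-cycles based at v_i on vertex set I. -/

import Mathlib

open scoped BigOperators

noncomputable section

/-- The ideal of squares of generators in the polynomial ring. -/
def zeonIdeal (n : ℕ) : Ideal (MvPolynomial (Fin n) ℂ) :=
  Ideal.span {p : MvPolynomial (Fin n) ℂ | ∃ i : Fin n, p = MvPolynomial.X i ^ 2}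

/-- The `n`-particle complex zeon algebra. -/
abbrev Zeon (n : ℕ) := MvPolynomial (Fin n) ℂ ⧸ zeonIdeal n

/-- The zeon generators. -/
def zeta (n : ℕ) (i : Fin n) : Zeon n := Ideal.Quotient.mk _ (MvPolynomial.X i)

/-- Basis blades. -/
def zetaBlade (n : ℕ) (I : Finset (Fin n)) : Zeon n := ∏ i ∈ I, zeta n i

/-- Scalar part map. -/
def scalarPart (n : ℕ) : Zeon n →+* ℂ :=
  Ideal.Quotient.lift _ (MvPolynomial.aeval (fun _ : Fin n => (0:ℂ))).toRingHom
    (fun a ha => by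
      have h : zeonIdeal n ≤
          RingHom.ker (MvPolynomial.aeval (fun _ : Fin n => (0:ℂ))).toRingHom := by
        rw [zeonIdeal, Ideal.span_le]
        rintro p ⟨i, rfl⟩
        simp [RingHom.mem_ker]
      exact h ha)

/-- Dual (nilpotent) part. -/
def dualPart (n : ℕ) (u : Zeon n) : Zeon n := u - algebraMap ℂ (Zeon n) (scalarPart n u)

/-- Conjugation on zeons: conjugate the complex coefficients, fix the generators. -/
def zconj (n : ℕ) : Zeon n →+* Zeon n :=
  Ideal.Quotient.lift _
    ((Ideal.Quotient.mk (zeonIdeal n)).comp (MvPolynomial.map (starRingEnd ℂ)))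
    (fun a ha => by
      have h : zeonIdeal n ≤ RingHom.ker
          ((Ideal.Quotient.mk (zeonIdeal n)).comp (MvPolynomial.map (starRingEnd ℂ))) := by
        rw [zeonIdeal, Ideal.span_le]
        rintro p ⟨i, rfl⟩
        simp only [Set.mem_setOf_eq, SetLike.mem_coe, RingHom.mem_ker, RingHom.comp_apply,
          map_pow, MvPolynomial.map_X]
        rw [← map_pow, Ideal.Quotient.eq_zero_iff_mem]
        exact Ideal.subset_span ⟨i, rfl⟩
      exact h ha)

end

noncomputable section

/-- Nilpotent adjacency matrix of a simple graph. -/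
def nilAdj {m : ℕ} (G : SimpleGraph (Fin m)) [DecidableRel G.Adj] :
    Matrix (Fin m) (Fin m) (Zeon m) :=
  fun i j => if G.Adj i j then zeta m j else 0

/-- Conjugate transpose of the nilpotent adjacency matrix. -/
def nilAdjDag {m : ℕ} (G : SimpleGraph (Fin m)) [DecidableRel G.Adj] :
    Matrix (Fin m) (Fin m) (Zeon m) :=
  fun i j => zconj m (nilAdj G j i)

/-- The zeon combinatorial Laplacian. -/
def zeonLaplacian {m : ℕ} (G : SimpleGraph (Fin m)) [DecidableRel G.Adj] :
    Matrix (Fin m) (Fin m) (Zeon m) :=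
  Matrix.diagonal (fun i => (G.degree i : Zeon m)) - nilAdj G

/-- Number of `k`-cycles based at `i` whose vertex set is `I`: closed walks
`c 0 = i, c 1, ..., c k = i` whose first `k` vertices are pairwise distinct and
have image exactly `I`. -/
def numCycles {m : ℕ} (G : SimpleGraph (Fin m)) [DecidableRel G.Adj]
    (i : Fin m) (k : ℕ) (I : Finset (Fin m)) : ℕ :=
  (Finset.univ.filter (fun c : Fin (k + 1) → Fin m =>
    c 0 = i ∧ c (Fin.last k) = i ∧
    (∀ j : Fin k, G.Adj (c j.castSucc) (c j.succ)) ∧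
    (∀ a b : Fin k, c a.castSucc = c b.castSucc → a = b) ∧
    Finset.image (fun j : Fin k => c j.castSucc) Finset.univ = I)).card

end
noncomputable section AuxProofs

open Finset Matrix

variable {m : ℕ}

lemma zconj_zeta (n : ℕ) (i : Fin n) : zconj n (zeta n i) = zeta n i := by
  simp [zconj, zeta, Ideal.Quotient.lift_mk]
  show (Ideal.Quotient.mk _) (MvPolynomial.map _ (MvPolynomial.X i)) = _
  rw [MvPolynomial.map_X]

lemma zeta_mul_self (n : ℕ) (i : Fin n) : zeta n i * zeta n i = 0 := by
  rw [zeta, ← RingHom.map_mul, ← sq, Ideal.Quotient.eq_zero_iff_mem]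
  exact Ideal.subset_span ⟨i, rfl⟩

lemma nilAdjDag_eq_transpose (G : SimpleGraph (Fin m)) [DecidableRel G.Adj] :
    nilAdjDag G = (nilAdj G)ᵀ := by
  ext i j
  simp only [nilAdjDag, nilAdj, Matrix.transpose_apply]
  split
  · exact zconj_zeta m i
  · exact map_zero _

lemma nilAdj_mul_transpose (G : SimpleGraph (Fin m)) [DecidableRel G.Adj] :
    nilAdj G * (nilAdj G)ᵀ = 0 := by
  ext i j
  rw [Matrix.mul_apply]
  simp only [Matrix.transpose_apply, nilAdj, Matrix.zero_apply]
  apply Finset.sum_eq_zero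
  intro t _
  split_ifs <;> simp [zeta_mul_self]

lemma add_pow_of_mul_eq_zero {R : Type*} [Ring R] (A B : R) (h : A * B = 0) (k : ℕ) :
    (A + B) ^ k = ∑ j ∈ Finset.range (k + 1), B ^ j * A ^ (k - j) := by
  induction k with
  | zero => simp
  | succ k ih =>
    have hAB : ∀ s : ℕ, 0 < s → A ^ s * B = 0 := by
      intro s hs
      obtain ⟨s, rfl⟩ := Nat.exists_eq_succ_of_ne_zero hs.ne'
      rw [pow_succ, mul_assoc, h, mul_zero]
    rw [pow_succ, ih, Finset.sum_mul]
    simp only [mul_add]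
    rw [Finset.sum_add_distrib]
    have h1 : ∑ j ∈ Finset.range (k + 1), B ^ j * A ^ (k - j) * A
        = ∑ j ∈ Finset.range (k + 1), B ^ j * A ^ (k + 1 - j) := by
      apply Finset.sum_congr rfl
      intro j hj
      rw [Finset.mem_range] at hj
      rw [mul_assoc, ← pow_succ]
      congr 2
      omega
    have h2 : ∑ j ∈ Finset.range (k + 1), B ^ j * A ^ (k - j) * B = B ^ (k + 1) := by
      rw [Finset.sum_range_succ]
      have hz : ∑ j ∈ Finset.range k, B ^ j * A ^ (k - j) * B = 0 := by
        apply Finset.sum_eq_zero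
        intro j hj
        rw [Finset.mem_range] at hj
        rw [mul_assoc, hAB (k - j) (by omega), mul_zero]
      rw [hz, zero_add, Nat.sub_self, pow_zero, mul_one, ← pow_succ]
    rw [h1, h2, Finset.sum_range_succ _ (k + 1)]
    simp

lemma nilAdj_pow_factor (G : SimpleGraph (Fin m)) [DecidableRel G.Adj]
    (s : ℕ) (hs : 0 < s) (l i : Fin m) :
    ∃ x : Zeon m, (nilAdj G ^ s) l i = x * zeta m i := by
  obtain ⟨s, rfl⟩ := Nat.exists_eq_succ_of_ne_zero hs.ne'
  refine ⟨∑ t, (nilAdj G ^ s) l t * (if G.Adj t i then 1 else 0), ?_⟩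
  rw [pow_succ, Matrix.mul_apply, Finset.sum_mul]
  apply Finset.sum_congr rfl
  intro t _
  simp only [nilAdj]
  split_ifs <;> simp

lemma symm_diag_aux (G : SimpleGraph (Fin m)) [DecidableRel G.Adj]
    (i : Fin m) (k : ℕ) (hk : 0 < k) :
    ((nilAdj G + nilAdjDag G) ^ k) i i = 2 * ((nilAdj G ^ k) i i) := by
  rw [nilAdjDag_eq_transpose, add_pow_of_mul_eq_zero _ _ (nilAdj_mul_transpose G),
    Matrix.sum_apply]
  have hzero : ∀ j ∈ Finset.range (k + 1), j ∉ ({0, k} : Finset ℕ) →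
      ((nilAdj G)ᵀ ^ j * nilAdj G ^ (k - j)) i i = 0 := by
    intro j hj hns
    rw [Finset.mem_range] at hj
    simp only [Finset.mem_insert, Finset.mem_singleton, not_or] at hns
    rw [Matrix.mul_apply]
    apply Finset.sum_eq_zero
    intro l _
    have hT : ((nilAdj G)ᵀ ^ j) i l = (nilAdj G ^ j) l i := by
      rw [← Matrix.transpose_pow, Matrix.transpose_apply]
    obtain ⟨x, hx⟩ := nilAdj_pow_factor G j (by omega) l i
    obtain ⟨y, hy⟩ := nilAdj_pow_factor G (k - j) (by omega) l i
    rw [hT, hx, hy]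
    calc x * zeta m i * (y * zeta m i) = x * y * (zeta m i * zeta m i) := by ring
      _ = 0 := by rw [zeta_mul_self, mul_zero]
  have hsub : ({0, k} : Finset ℕ) ⊆ Finset.range (k + 1) := by
    intro x hx
    simp only [Finset.mem_insert, Finset.mem_singleton] at hx
    rcases hx with rfl | rfl <;> rw [Finset.mem_range] <;> omega
  rw [← Finset.sum_subset hsub hzero, Finset.sum_pair hk.ne]
  rw [pow_zero, one_mul, Nat.sub_zero, Nat.sub_self, pow_zero, mul_one,
    ← Matrix.transpose_pow, Matrix.transpose_apply, two_mul]

/-- The set of walks of length `k` from `i` to `j`. -/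
def walkSet (G : SimpleGraph (Fin m)) [DecidableRel G.Adj] (k : ℕ) (i j : Fin m) :
    Finset (Fin (k + 1) → Fin m) :=
  Finset.univ.filter (fun c => c 0 = i ∧ c (Fin.last k) = j ∧
    ∀ t : Fin k, G.Adj (c t.castSucc) (c t.succ))

set_option maxHeartbeats 1000000 in
lemma nilAdj_pow_apply (G : SimpleGraph (Fin m)) [DecidableRel G.Adj] (k : ℕ) (i j : Fin m) :
    (nilAdj G ^ k) i j = ∑ c ∈ walkSet G k i j, ∏ t : Fin k, zeta m (c t.succ) := by
  induction k generalizing j with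
  | zero =>
    rw [pow_zero, Matrix.one_apply]
    by_cases h : i = j
    · subst h
      have hs : walkSet G 0 i i = {fun _ => i} := by
        ext c
        simp only [walkSet, Finset.mem_filter, Finset.mem_univ, true_and, Finset.mem_singleton]
        constructor
        · rintro ⟨h0, -, -⟩
          funext t
          rw [Fin.eq_zero t, h0]
        · rintro rfl
          exact ⟨rfl, rfl, fun t => t.elim0⟩
      rw [hs]
      simp
    · have hs : walkSet G 0 i j = ∅ := by
        ext c
        simp only [walkSet, Finset.mem_filter, Finset.mem_univ, true_and,
          Finset.notMem_empty, iff_false]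
        rintro ⟨h0, hl, -⟩
        apply h
        rw [← h0, ← hl]
        rfl
      rw [hs]
      simp [h]
  | succ k ih =>
    rw [pow_succ, Matrix.mul_apply]
    set W : Finset (Fin (k + 1) → Fin m) :=
      Finset.univ.filter (fun d => d 0 = i ∧ ∀ t : Fin k, G.Adj (d t.castSucc) (d t.succ)) with hW
    have hWl : ∀ l : Fin m, walkSet G k i l = W.filter (fun d => d (Fin.last k) = l) := by
      intro l
      ext d
      simp only [walkSet, hW, Finset.mem_filter, Finset.mem_univ, true_and]
      tauto
    calc ∑ l, (nilAdj G ^ k) i l * nilAdj G l j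
        = ∑ l, ∑ d ∈ walkSet G k i l,
            (∏ t : Fin k, zeta m (d t.succ)) * nilAdj G (d (Fin.last k)) j := by
          apply Finset.sum_congr rfl
          intro l _
          rw [ih l, Finset.sum_mul]
          apply Finset.sum_congr rfl
          intro d hd
          rw [walkSet, Finset.mem_filter] at hd
          rw [hd.2.2.1]
      _ = ∑ l, ∑ d ∈ W.filter (fun d => d (Fin.last k) = l),
            (∏ t : Fin k, zeta m (d t.succ)) * nilAdj G (d (Fin.last k)) j :=
          Finset.sum_congr rfl (fun l _ => by rw [hWl])
      _ = ∑ d ∈ W, (∏ t : Fin k, zeta m (d t.succ)) * nilAdj G (d (Fin.last k)) j :=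
          Finset.sum_fiberwise_of_maps_to (fun d _ => Finset.mem_univ _) _
      _ = ∑ d ∈ W.filter (fun d => G.Adj (d (Fin.last k)) j),
            (∏ t : Fin k, zeta m (d t.succ)) * zeta m j := by
          conv_rhs => rw [Finset.sum_filter]
          apply Finset.sum_congr rfl
          intro d _
          simp only [nilAdj]
          split_ifs <;> simp
      _ = ∑ c ∈ walkSet G (k + 1) i j, ∏ t : Fin (k + 1), zeta m (c t.succ) := by
          refine Finset.sum_nbij' (fun d => Fin.snoc d j) (fun c => Fin.init c)
            ?_ ?_ ?_ ?_ ?_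
          · intro d hd
            simp only [Finset.mem_filter, hW, Finset.mem_univ, true_and] at hd
            obtain ⟨⟨h0, hadj⟩, hlast⟩ := hd
            simp only [walkSet, Finset.mem_filter, Finset.mem_univ, true_and]
            refine ⟨?_, ?_, ?_⟩
            · rw [← Fin.castSucc_zero, Fin.snoc_castSucc, h0]
            · exact Fin.snoc_last _ _
            · intro t
              refine Fin.lastCases ?_ ?_ t
              · rw [Fin.snoc_castSucc, Fin.succ_last, Fin.snoc_last]
                exact hlast
              · intro s
                rw [Fin.succ_castSucc, Fin.snoc_castSucc, Fin.snoc_castSucc]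
                exact hadj s
          · intro c hc
            simp only [walkSet, Finset.mem_filter, Finset.mem_univ, true_and] at hc
            obtain ⟨h0, hlast, hadj⟩ := hc
            simp only [Finset.mem_filter, hW, Finset.mem_univ, true_and, Fin.init_def]
            refine ⟨⟨?_, ?_⟩, ?_⟩
            · rwa [Fin.castSucc_zero]
            · intro t
              rw [← Fin.succ_castSucc]
              exact hadj t.castSucc
            · have := hadj (Fin.last k)
              rwa [Fin.succ_last, hlast] at this
          · intro d _
            exact Fin.init_snoc _ _
          · intro c hc
            simp only [walkSet, Finset.mem_filter, Finset.mem_univ, true_and] at hc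
            rw [← hc.2.1]
            exact Fin.snoc_init_self c
          · intro d hd
            simp only [Fin.prod_univ_castSucc, Fin.succ_castSucc, Fin.snoc_castSucc,
              Fin.succ_last, Fin.snoc_last]

lemma prod_zeta_eq_zero_of_not_inj {k : ℕ} (g : Fin k → Fin m)
    (h : ¬ Function.Injective g) : ∏ t : Fin k, zeta m (g t) = 0 := by
  rw [Function.not_injective_iff] at h
  obtain ⟨a, b, hab, hne⟩ := h
  rw [← Finset.mul_prod_erase Finset.univ _ (Finset.mem_univ a),
    ← Finset.mul_prod_erase _ _ (Finset.mem_erase.2 ⟨Ne.symm hne, Finset.mem_univ b⟩),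
    ← mul_assoc, hab, zeta_mul_self, zero_mul]

/-- shift the product for a closed walk -/
lemma closed_walk_prod {k : ℕ} (c : Fin (k + 1 + 1) → Fin m) (i : Fin m)
    (h0 : c 0 = i) (hl : c (Fin.last (k + 1)) = i) :
    ∏ t : Fin (k + 1), zeta m (c t.succ) = ∏ t : Fin (k + 1), zeta m (c t.castSucc) := by
  rw [← Equiv.prod_comp (finRotate (k + 1)) (fun t => zeta m (c t.castSucc))]
  apply Finset.prod_congr rfl
  intro t _
  refine Fin.lastCases ?_ ?_ t
  · rw [finRotate_last, Fin.castSucc_zero, h0, Fin.succ_last, hl]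
  · intro s
    congr 1
    rw [finRotate_succ_apply, Fin.coeSucc_eq_succ, Fin.succ_castSucc]

lemma nilAdj_pow_diag_eq_cycles (G : SimpleGraph (Fin m)) [DecidableRel G.Adj]
    (i : Fin m) (k : ℕ) (hk : 0 < k) :
    (nilAdj G ^ k) i i =
      ∑ I ∈ Finset.univ.filter (fun I : Finset (Fin m) => I.card = k),
        (numCycles G i k I : Zeon m) * zetaBlade m I := by
  obtain ⟨k, rfl⟩ := Nat.exists_eq_succ_of_ne_zero hk.ne'
  rw [nilAdj_pow_apply]
  have step1 : ∑ c ∈ walkSet G (k + 1) i i, ∏ t : Fin (k + 1), zeta m (c t.succ)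
      = ∑ c ∈ walkSet G (k + 1) i i, ∏ t : Fin (k + 1), zeta m (c t.castSucc) := by
    apply Finset.sum_congr rfl
    intro c hc
    simp only [walkSet, Finset.mem_filter] at hc
    exact closed_walk_prod c i hc.2.1 hc.2.2.1
  rw [step1]
  set C : Finset (Fin (k + 1 + 1) → Fin m) :=
    (walkSet G (k + 1) i i).filter
      (fun c => Function.Injective (fun t : Fin (k + 1) => c t.castSucc)) with hC
  have step2 : ∑ c ∈ walkSet G (k + 1) i i, ∏ t : Fin (k + 1), zeta m (c t.castSucc)
      = ∑ c ∈ C, ∏ t : Fin (k + 1), zeta m (c t.castSucc) := by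
    rw [hC]
    symm
    apply Finset.sum_filter_of_ne
    intro c _ hne
    by_contra hni
    exact hne (prod_zeta_eq_zero_of_not_inj _ hni)
  rw [step2]
  have step3 : ∑ c ∈ C, ∏ t : Fin (k + 1), zeta m (c t.castSucc)
      = ∑ c ∈ C, zetaBlade m (Finset.image (fun t : Fin (k + 1) => c t.castSucc) Finset.univ) := by
    apply Finset.sum_congr rfl
    intro c hc
    rw [hC, Finset.mem_filter] at hc
    rw [zetaBlade, Finset.prod_image (fun x _ y _ h => hc.2 h)]
  rw [step3]
  rw [← Finset.sum_fiberwise_of_maps_to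
    (g := fun c : Fin (k + 1 + 1) → Fin m =>
      Finset.image (fun t : Fin (k + 1) => c t.castSucc) Finset.univ)
    (t := Finset.univ.filter (fun I : Finset (Fin m) => I.card = k + 1)) ?_]
  · apply Finset.sum_congr rfl
    intro I hI
    have hfib : C.filter (fun c => Finset.image
          (fun t : Fin (k + 1) => c t.castSucc) Finset.univ = I)
        = Finset.univ.filter (fun c : Fin (k + 1 + 1) → Fin m =>
            c 0 = i ∧ c (Fin.last (k + 1)) = i ∧
            (∀ j : Fin (k + 1), G.Adj (c j.castSucc) (c j.succ)) ∧
            (∀ a b : Fin (k + 1), c a.castSucc = c b.castSucc → a = b) ∧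
            Finset.image (fun j : Fin (k + 1) => c j.castSucc) Finset.univ = I) := by
      ext c
      simp only [hC, Finset.mem_filter]
      simp only [hC, walkSet, Finset.mem_filter, Finset.mem_univ, true_and,
        Function.Injective]
      tauto
    calc ∑ c ∈ C.filter (fun c =>
            Finset.image (fun t : Fin (k + 1) => c t.castSucc) Finset.univ = I),
          zetaBlade m (Finset.image (fun t : Fin (k + 1) => c t.castSucc) Finset.univ)
        = ∑ c ∈ C.filter (fun c =>
            Finset.image (fun t : Fin (k + 1) => c t.castSucc) Finset.univ = I),
          zetaBlade m I := by
          apply Finset.sum_congr rfl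
          intro c hc
          rw [(Finset.mem_filter.1 hc).2]
      _ = (numCycles G i (k + 1) I : Zeon m) * zetaBlade m I := by
          rw [Finset.sum_const, nsmul_eq_mul, hfib, numCycles]
  · intro c hc
    rw [hC, Finset.mem_filter] at hc
    simp only [Finset.mem_filter, Finset.mem_univ, true_and]
    rw [Finset.card_image_of_injective _ hc.2, Finset.card_univ, Fintype.card_fin]

end AuxProofs
/-- the `(i,i)` entry of `(Ψ + Ψ†)^k` is twice that of `Ψ^k`,
i.e. twice the cycle enumerator. -/
theorem symm_nilAdj_pow_diag (m : ℕ) (G : SimpleGraph (Fin m)) [DecidableRel G.Adj]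
    (i : Fin m) (k : ℕ) (hk : 0 < k) :
    ((nilAdj G + nilAdjDag G) ^ k) i i = 2 * ((nilAdj G ^ k) i i) ∧
    ((nilAdj G + nilAdjDag G) ^ k) i i =
      2 * ∑ I ∈ Finset.univ.filter (fun I : Finset (Fin m) => I.card = k),
        (numCycles G i k I : Zeon m) * zetaBlade m I := by
  refine ⟨symm_diag_aux G i k hk, (symm_diag_aux G i k hk).trans ?_⟩
  rw [nilAdj_pow_diag_eq_cycles G i k hk]
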